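/- Let Γ̃ be a numerical semigroup of genus γ and let g ≥ 6γ + 4 be an integer. Define Γ = {2n : n ∈ Γ̃} ∪ {2g − 1 − 2t : t ∈ ℤ, t ∉ Γ̃} ∩ ℕ (where t ranges over all integers, including negative ones, not lying in Γ̃). Then Γ is a numerical semigroup which is symmetric with Frobenius number 2g − 1, i.e. for every integer n with 0 ≤ n ≤ 2g−1, n ∈ Γ if and only if 2g−1−n ∉ Γ; in particular Γ has genus g. -/

import Mathlib

/-- Stöhr–Torres construction: if Γ̃ is a numerical semigroup of genus γ and
g ≥ 6γ + 4, then Γ = {2n : n ∈ Γ̃} ∪ {2g−1−2t : t ∈ ℤ, t ∉ Γ̃} ∩ ℕ is a numerical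
semigroup which is symmetric with Frobenius number 2g−1; in particular Γ has genus g. -/
theorem stmt6 (Γ' : AddSubmonoid ℕ) (γ g : ℕ)
    (hfin : {n : ℕ | n ∉ Γ'}.Finite) (hγ : {n : ℕ | n ∉ Γ'}.ncard = γ)
    (hg : 6 * γ + 4 ≤ g) (Γ : Set ℕ)
    (hΓ : Γ = {m : ℕ | ∃ n ∈ Γ', m = 2 * n} ∪
      {m : ℕ | ∃ t : ℤ, (∀ n ∈ Γ', (n : ℤ) ≠ t) ∧ (m : ℤ) = 2 * g - 1 - 2 * t}) :
    (0 : ℕ) ∈ Γ ∧ (∀ a ∈ Γ, ∀ b ∈ Γ, a + b ∈ Γ) ∧ {n : ℕ | n ∉ Γ}.Finite ∧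
    (2 * g - 1) ∉ Γ ∧ (∀ m : ℕ, 2 * g - 1 < m → m ∈ Γ) ∧
    (∀ n : ℕ, n ≤ 2 * g - 1 → (n ∈ Γ ↔ (2 * g - 1 - n) ∉ Γ)) ∧
    {n : ℕ | n ∉ Γ}.ncard = g := by
  classical
  have hmem : ∀ m : ℕ, m ∈ Γ ↔ (∃ n ∈ Γ', m = 2 * n) ∨
      (∃ t : ℤ, (∀ n ∈ Γ', (n : ℤ) ≠ t) ∧ (m : ℤ) = 2 * g - 1 - 2 * t) := by
    intro m; rw [hΓ]; simp [Set.mem_union, Set.mem_setOf_eq]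
  have hcard : hfin.toFinset.card = γ := by
    rw [← hγ, Set.ncard_eq_toFinset_card _ hfin]
  -- every gap of Γ' is < 2γ
  have key : ∀ F : ℕ, F ∉ Γ' → F < 2 * γ := by
    intro F hF
    by_contra hge
    push_neg at hge
    have hsum : ((Finset.range (F+1)).filter (fun i => i ∈ Γ')).card +
        ((Finset.range (F+1)).filter (fun i => ¬ i ∈ Γ')).card = F + 1 := by
      rw [Finset.card_filter_add_card_filter_not, Finset.card_range]
    have hB : ((Finset.range (F+1)).filter (fun i => ¬ i ∈ Γ')).card ≤ γ := by
      rw [← hcard]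
      apply Finset.card_le_card
      intro i hi
      simp only [Finset.mem_filter] at hi
      simpa [Set.Finite.mem_toFinset] using hi.2
    have hA : ((Finset.range (F+1)).filter (fun i => i ∈ Γ')).card ≤
        ((Finset.range (F+1)).filter (fun i => ¬ i ∈ Γ')).card := by
      apply Finset.card_le_card_of_injOn (fun i => F - i)
      · intro i hi
        simp only [Finset.mem_coe, Finset.mem_filter, Finset.mem_range] at hi ⊢
        refine ⟨by omega, fun hFi => hF ?_⟩
        have h2 := Γ'.add_mem hi.2 hFi
        rwa [Nat.add_sub_cancel' (by omega : i ≤ F)] at h2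
      · intro a ha b hb hab
        simp only [Finset.coe_filter, Finset.mem_range, Set.mem_setOf_eq] at ha hb
        simp only at hab
        omega
    omega
  have keyI : ∀ t : ℤ, (∀ n ∈ Γ', (n : ℤ) ≠ t) → t < 2 * γ := by
    intro t ht
    by_contra h
    push_neg at h
    have h0 : (0:ℤ) ≤ t := le_trans (by positivity) h
    lift t to ℕ using h0
    have htΓ : t ∈ Γ' := by
      by_contra hn
      have := key t hn
      omega
    exact ht t htΓ rfl
  have hEven : ∀ k : ℕ, 2 * k ∈ Γ ↔ k ∈ Γ' := by
    intro k
    rw [hmem]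
    constructor
    · rintro (⟨n, hn, he⟩ | ⟨t, ht, he⟩)
      · rwa [show k = n from by omega]
      · exfalso; omega
    · intro hk; exact Or.inl ⟨k, hk, rfl⟩
  have hOddLow : ∀ m t : ℕ, m + 2 * t = 2 * g - 1 → (m ∈ Γ ↔ t ∉ Γ') := by
    intro m t hmt
    have hg4 : 4 ≤ g := by omega
    rw [hmem]
    constructor
    · rintro (⟨n, hn, he⟩ | ⟨t', ht', he⟩)
      · exfalso; omega
      · have heq : t' = (t : ℤ) := by omega
        intro htΓ
        exact ht' t htΓ heq.symm
    · intro ht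
      refine Or.inr ⟨(t : ℤ), fun n hn hne => ?_, by omega⟩
      have : n = t := by exact_mod_cast hne
      exact ht (this ▸ hn)
  have hbig : ∀ m : ℕ, 2 * g - 1 < m → m ∈ Γ := by
    intro m hm
    rcases Nat.even_or_odd m with ⟨k, hk⟩ | ⟨k, hk⟩
    · have hkΓ : k ∈ Γ' := by
        by_contra h
        have := key k h
        omega
      rw [show m = 2 * k from by omega]
      exact (hEven k).mpr hkΓ
    · rw [hmem]
      refine Or.inr ⟨(g : ℤ) - 1 - k, fun n hn hne => ?_, by omega⟩
      have hn0 : (0:ℤ) ≤ (n:ℤ) := Int.natCast_nonneg n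
      omega
  have hF : (2 * g - 1) ∉ Γ := by
    rw [hOddLow (2 * g - 1) 0 (by omega)]
    exact fun h => h Γ'.zero_mem
  have hclose : ∀ a ∈ Γ, ∀ b ∈ Γ, a + b ∈ Γ := by
    have eo : ∀ n ∈ Γ', ∀ t : ℤ, (∀ n' ∈ Γ', (n' : ℤ) ≠ t) → ∀ m : ℕ,
        (m : ℤ) = 2 * g - 1 - 2 * t + 2 * n → m ∈ Γ := by
      intro n hn t ht m hm
      rw [hmem]
      refine Or.inr ⟨t - n, fun n' hn' hne => ?_, by omega⟩
      exact ht (n' + n) (Γ'.add_mem hn' hn) (by push_cast; omega)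
    intro a ha b hb
    rw [hmem] at ha hb
    rcases ha with ⟨n1, hn1, he1⟩ | ⟨t1, ht1, he1⟩ <;>
      rcases hb with ⟨n2, hn2, he2⟩ | ⟨t2, ht2, he2⟩
    · rw [hmem]; exact Or.inl ⟨n1 + n2, Γ'.add_mem hn1 hn2, by omega⟩
    · exact eo n1 hn1 t2 ht2 (a + b) (by push_cast; omega)
    · exact eo n2 hn2 t1 ht1 (a + b) (by push_cast; omega)
    · have hb1 := keyI t1 ht1
      have hb2 := keyI t2 ht2
      rw [hmem]
      have hN : (0:ℤ) ≤ 2 * g - 1 - t1 - t2 := by omega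
      refine Or.inl ⟨(2 * (g:ℤ) - 1 - t1 - t2).toNat, ?_, ?_⟩
      · by_contra h
        have := key _ h
        omega
      · omega
  have hfinΓ : {n : ℕ | n ∉ Γ}.Finite := by
    apply Set.Finite.subset (Set.finite_Iio (2 * g))
    intro n hn
    simp only [Set.mem_setOf_eq] at hn
    simp only [Set.mem_Iio]
    by_contra h
    exact hn (hbig n (by omega))
  have hsym : ∀ n : ℕ, n ≤ 2 * g - 1 → (n ∈ Γ ↔ (2 * g - 1 - n) ∉ Γ) := by
    intro n hn
    have hg4 : 4 ≤ g := by omega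
    rcases Nat.even_or_odd n with ⟨k, hk⟩ | ⟨k, hk⟩
    · rw [show n = 2 * k from by omega, hEven]
      rw [hOddLow (2 * g - 1 - 2 * k) k (by omega)]
      tauto
    · rw [hOddLow n (g - 1 - k) (by omega)]
      rw [show 2 * g - 1 - n = 2 * (g - 1 - k) from by omega, hEven]
  have hcount : {n : ℕ | n ∉ Γ}.ncard = g := by
    have hset : {n : ℕ | n ∉ Γ} = ↑((Finset.range (2 * g)).filter (fun n => n ∉ Γ)) := by
      ext n
      simp only [Set.mem_setOf_eq, Finset.coe_filter, Finset.mem_range]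
      constructor
      · intro h
        refine ⟨?_, h⟩
        by_contra hlt
        exact h (hbig n (by omega))
      · exact fun h => h.2
    rw [hset, Set.ncard_coe_finset]
    have h1 : ((Finset.range (2 * g)).filter (fun n => n ∈ Γ)).card +
        ((Finset.range (2 * g)).filter (fun n => ¬ n ∈ Γ)).card = 2 * g := by
      rw [Finset.card_filter_add_card_filter_not, Finset.card_range]
    have h2 : ((Finset.range (2 * g)).filter (fun n => ¬ n ∈ Γ)).card ≤
        ((Finset.range (2 * g)).filter (fun n => n ∈ Γ)).card := by
      apply Finset.card_le_card_of_injOn (fun n => 2 * g - 1 - n)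
      · intro n hn
        simp only [Finset.mem_coe, Finset.mem_filter, Finset.mem_range] at hn ⊢
        refine ⟨by omega, ?_⟩
        by_contra h
        exact hn.2 ((hsym n (by omega)).mpr h)
      · intro a ha b hb hab
        simp only [Finset.coe_filter, Finset.mem_range, Set.mem_setOf_eq] at ha hb
        simp only at hab
        omega
    have h3 : ((Finset.range (2 * g)).filter (fun n => n ∈ Γ)).card ≤
        ((Finset.range (2 * g)).filter (fun n => ¬ n ∈ Γ)).card := by
      apply Finset.card_le_card_of_injOn (fun n => 2 * g - 1 - n)
      · intro n hn
        simp only [Finset.mem_coe, Finset.mem_filter, Finset.mem_range] at hn ⊢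
        exact ⟨by omega, (hsym n (by omega)).mp hn.2⟩
      · intro a ha b hb hab
        simp only [Finset.coe_filter, Finset.mem_range, Set.mem_setOf_eq] at ha hb
        simp only at hab
        omega
    omega
  exact ⟨(hmem 0).mpr (Or.inl ⟨0, Γ'.zero_mem, by omega⟩), hclose, hfinΓ, hF, hbig, hsym, hcount⟩
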